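/- If π has exactly s successive lower-Durfee squares with sides d_1, d_2, ..., d_s from bottom to top, then d_i ≤ d_{i+1} for i = 1, ..., s-2. -/

import Mathlib

/-- The side of the Durfee square of a partition whose parts are listed in
weakly decreasing order `L`: the number of indices `i` with `L[i] ≥ i+1`. -/
def durfee (L : List ℕ) : ℕ :=
  ((Finset.range L.length).filter fun i => i + 1 ≤ L.getD i 0).card

theorem durfee_le (L : List ℕ) : durfee L ≤ L.length := by
  classical
  calc ((Finset.range L.length).filter fun i => i + 1 ≤ L.getD i 0).card
      ≤ (Finset.range L.length).card := Finset.card_filter_le _ _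
    _ = L.length := Finset.card_range _

/-- The sides of the successive Durfee squares (from the top) of a partition
whose parts are listed in weakly decreasing order. -/
def durfeeSides (L : List ℕ) : List ℕ :=
  if h : durfee L = 0 then [] else durfee L :: durfeeSides (L.drop (durfee L))
  termination_by L.length
  decreasing_by
    have h1 := durfee_le L
    simp only [List.length_drop]
    omega

/-- The sides of the successive lower-Durfee squares (from the bottom) of a
partition whose parts are listed in weakly *increasing* order `M`: the first
lower-Durfee square has side `min M.head M.length`, and one recurses on the
remaining (larger) parts. -/
def lowerSides (M : List ℕ) : List ℕ :=
  if h : min (M.headD 0) M.length = 0 then []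
  else min (M.headD 0) M.length :: lowerSides (M.drop (min (M.headD 0) M.length))
  termination_by M.length
  decreasing_by
    simp only [List.length_drop]
    omega

lemma lowerSides_cons (M : List ℕ) (h : min (M.headD 0) M.length ≠ 0) :
    lowerSides M = min (M.headD 0) M.length ::
      lowerSides (M.drop (min (M.headD 0) M.length)) := by
  rw [lowerSides, dif_neg h]

lemma lowerSides_nil (M : List ℕ) (h : min (M.headD 0) M.length = 0) :
    lowerSides M = [] := by
  rw [lowerSides, dif_pos h]

lemma head_le_getD (M : List ℕ) (hsort : M.Pairwise (· ≤ ·)) (d : ℕ) (hd : d < M.length) :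
    M.headD 0 ≤ M.getD d 0 := by
  have h0 : 0 < M.length := by omega
  rw [List.getD_eq_getElem M 0 hd]
  have : M.headD 0 = M[0] := by
    cases M with
    | nil => simp at h0
    | cons a l => simp
  rw [this]
  rcases Nat.eq_or_lt_of_le (Nat.zero_le d) with h | h
  · subst h; rfl
  · exact List.pairwise_iff_getElem.mp hsort 0 d h0 hd h

lemma headD_drop (M : List ℕ) (d : ℕ) (hd : d < M.length) :
    (M.drop d).headD 0 = M.getD d 0 := by
  have hlen : 0 < (M.drop d).length := by simp; omega
  rw [show (M.drop d).headD 0 = (M.drop d).getD 0 0 from by cases M.drop d <;> simp,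
      List.getD_eq_getElem _ 0 hlen, List.getD_eq_getElem M 0 hd, List.getElem_drop]
  simp

lemma aux (M : List ℕ) (hsort : M.Pairwise (· ≤ ·)) (i : ℕ)
    (hi : i + 2 < (lowerSides M).length) :
    (lowerSides M).getD i 0 ≤ (lowerSides M).getD (i+1) 0 := by
  have h0 : min (M.headD 0) M.length ≠ 0 := by
    intro h; rw [lowerSides_nil M h] at hi; simp at hi
  rw [lowerSides_cons M h0] at hi ⊢
  match i with
  | 0 =>
    simp only [List.getD_cons_zero, List.getD_cons_succ]
    have h1 : min ((M.drop (min (M.headD 0) M.length)).headD 0)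
        (M.drop (min (M.headD 0) M.length)).length ≠ 0 := by
      intro h
      rw [lowerSides_nil _ h] at hi
      simp at hi
    rw [lowerSides_cons _ h1] at hi ⊢
    simp only [List.getD_cons_zero]
    set d := min (M.headD 0) M.length with hdd
    set M' := M.drop d with hM'
    set d' := min (M'.headD 0) M'.length with hdd'
    have h2 : min ((M'.drop d').headD 0) (M'.drop d').length ≠ 0 := by
      intro h
      rw [lowerSides_nil _ h] at hi
      simp at hi
    have h3 : (M'.drop d').length ≠ 0 := by omega
    have h4 : d' < M'.length := by
      have : (M'.drop d').length = M'.length - d' := List.length_drop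
      omega
    have h5 : d' = M'.headD 0 := by rw [hdd']; omega
    have h6 : 0 < M'.length := by omega
    have hML : M'.length = M.length - d := by
      rw [hM']; exact List.length_drop
    have h7 : d < M.length := by omega
    have h8 : d ≤ M.headD 0 := by omega
    have h9 : M.headD 0 ≤ M.getD d 0 := head_le_getD M hsort d h7
    rw [h5, hM', headD_drop M d h7]
    omega
  | Nat.succ j =>
    simp only [List.getD_cons_succ]
    have hlen : j + 2 < (lowerSides (M.drop (min (M.headD 0) M.length))).length := by
      rw [List.length_cons] at hi; omega
    have hM : 0 < M.length := by
      by_contra h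
      have : M = [] := by cases M <;> simp_all
      subst this; simp at h0
    exact aux (M.drop (min (M.headD 0) M.length)) hsort.drop j hlen
termination_by M.length
decreasing_by
  simp only [List.length_drop]; omega

/-- If `π` (parts listed in weakly increasing order `M`, all positive) has
exactly `s` successive lower-Durfee squares with sides `d_1, …, d_s` from
bottom to top, then `d_i ≤ d_{i+1}` for `i = 1, …, s-2`. -/
theorem lower_durfee_sides_mono (M : List ℕ) (hsort : M.Pairwise (· ≤ ·))
    (hpos : ∀ x ∈ M, 1 ≤ x) (s : ℕ) (hs : (lowerSides M).length = s)
    (i : ℕ) (hi : i + 2 < s) :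
    (lowerSides M).getD i 0 ≤ (lowerSides M).getD (i + 1) 0 := by
  subst hs
  exact aux M hsort i hi
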